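/- For τ ∈ (0,1), η ∈ ℝ, and G_η(ξ) = ½ + ξ − ξ_τ + ½e^{-2ξ}cos(2η) − 2τcosh²ξ cos²η/(1+τ) − 2τsinh²ξ sin²η/(1−τ), the function G_η is strictly negative for all ξ ≥ 0 with ξ ≠ ξ_τ = −½log τ. -/

import Mathlib

noncomputable def Gfun (τ η : ℝ) (ξ : ℝ) : ℝ :=
  1 / 2 + ξ - (-Real.log τ / 2) + Real.exp (-2 * ξ) * Real.cos (2 * η) / 2
    - 2 * τ * Real.cosh ξ ^ 2 * Real.cos η ^ 2 / (1 + τ)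
    - 2 * τ * Real.sinh ξ ^ 2 * Real.sin η ^ 2 / (1 - τ)

lemma Gfun_hasDeriv (τ η ξ : ℝ) :
    HasDerivAt (Gfun τ η)
      (1 - Real.exp (-2*ξ) * Real.cos (2*η)
        - 4*τ*Real.cosh ξ*Real.sinh ξ*Real.cos η^2/(1+τ)
        - 4*τ*Real.sinh ξ*Real.cosh ξ*Real.sin η^2/(1-τ)) ξ := by
  have h0 : HasDerivAt (fun x : ℝ => -2*x) (-2) ξ := by
    simpa using (hasDerivAt_id ξ).const_mul (-2)
  have h1 : HasDerivAt (fun x : ℝ => Real.exp (-2*x)) (Real.exp (-2*ξ) * (-2)) ξ := h0.exp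
  have hc : HasDerivAt (fun x : ℝ => Real.cosh x ^ 2)
      ((2:ℕ) * Real.cosh ξ ^ 1 * Real.sinh ξ) ξ := (Real.hasDerivAt_cosh ξ).pow 2
  have hs : HasDerivAt (fun x : ℝ => Real.sinh x ^ 2)
      ((2:ℕ) * Real.sinh ξ ^ 1 * Real.cosh ξ) ξ := (Real.hasDerivAt_sinh ξ).pow 2
  have H := (((((hasDerivAt_id ξ).const_add (1/2:ℝ)).sub_const (-Real.log τ / 2)).add
      ((h1.mul_const (Real.cos (2*η))).div_const 2)).sub
      (((hc.const_mul (2*τ)).mul_const (Real.cos η^2)).div_const (1+τ))).sub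
      (((hs.const_mul (2*τ)).mul_const (Real.sin η^2)).div_const (1-τ))
  exact H.congr_deriv (by push_cast; ring)

lemma Gfun_deriv_eq (τ η ξ : ℝ) (hτ0 : 0 < τ) (hτ1 : τ < 1) :
    1 - Real.exp (-2*ξ) * Real.cos (2*η)
        - 4*τ*Real.cosh ξ*Real.sinh ξ*Real.cos η^2/(1+τ)
        - 4*τ*Real.sinh ξ*Real.cosh ξ*Real.sin η^2/(1-τ)
      = ((1 - τ * Real.exp ξ ^ 2) *
          ((1 - τ * Real.cos (2*η)) * Real.exp ξ ^ 2 - Real.cos (2*η) + τ)) /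
        ((1+τ) * (1-τ) * Real.exp ξ ^ 2) := by
  have hu : (0:ℝ) < Real.exp ξ := Real.exp_pos ξ
  have he2 : Real.exp (-2*ξ) = (Real.exp ξ)⁻¹ ^ 2 := by
    rw [← Real.exp_neg]
    rw [← Real.exp_nat_mul]
    norm_num
  have hcc : Real.cos η ^ 2 = (1 + Real.cos (2*η)) / 2 := by
    rw [Real.cos_sq]; ring
  have hss : Real.sin η ^ 2 = (1 - Real.cos (2*η)) / 2 := by
    rw [Real.sin_sq, hcc]; ring
  rw [he2, hcc, hss, Real.cosh_eq, Real.sinh_eq, Real.exp_neg]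
  have h1 : (1:ℝ) + τ ≠ 0 := by linarith
  have h2 : (1:ℝ) - τ ≠ 0 := by linarith
  field_simp
  ring

lemma Gfun_at_xitau (τ η : ℝ) (hτ0 : 0 < τ) (hτ1 : τ < 1) :
    Gfun τ η (-Real.log τ / 2) = 0 := by
  unfold Gfun
  set ξ := -Real.log τ / 2 with hξ
  have he : Real.exp (-2 * ξ) = τ := by
    rw [show -2 * ξ = Real.log τ by rw [hξ]; ring, Real.exp_log hτ0]
  have hcosh2 : Real.cosh (2*ξ) = (τ⁻¹ + τ)/2 := by
    rw [show 2*ξ = -Real.log τ by rw [hξ]; ring, Real.cosh_eq, Real.exp_neg,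
      neg_neg, Real.exp_log hτ0]
  have hch : Real.cosh ξ ^ 2 = (τ⁻¹ + τ + 2)/4 := by
    have h := Real.cosh_two_mul ξ
    have h2 := Real.cosh_sq ξ
    rw [hcosh2] at h; linarith
  have hsh : Real.sinh ξ ^ 2 = (τ⁻¹ + τ - 2)/4 := by
    have h := Real.cosh_sq ξ
    linarith
  have hcc : Real.cos η ^ 2 = (1 + Real.cos (2*η)) / 2 := by
    rw [Real.cos_sq]; ring
  have hss : Real.sin η ^ 2 = (1 - Real.cos (2*η)) / 2 := by
    rw [Real.sin_sq, hcc]; ring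
  rw [he, hch, hsh, hcc, hss]
  have h1 : (1:ℝ) + τ ≠ 0 := by linarith
  have h2 : (1:ℝ) - τ ≠ 0 := by linarith
  have hτ' : τ ≠ 0 := ne_of_gt hτ0
  field_simp
  ring

theorem Gfun_neg_off_xitau (τ η : ℝ) (hτ0 : 0 < τ) (hτ1 : τ < 1) :
    ∀ ξ : ℝ, 0 ≤ ξ → ξ ≠ -Real.log τ / 2 → Gfun τ η ξ < 0 := by
  set ξτ := -Real.log τ / 2 with hξτ
  have hξτpos : 0 < ξτ := by
    have : Real.log τ < 0 := Real.log_neg hτ0 hτ1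
    rw [hξτ]; linarith
  have hcont : Continuous (Gfun τ η) := by
    rw [continuous_iff_continuousAt]
    exact fun x => (Gfun_hasDeriv τ η x).differentiableAt.continuousAt
  have hcos1 : Real.cos (2*η) ≤ 1 := Real.cos_le_one _
  have hcosm1 : -1 ≤ Real.cos (2*η) := Real.neg_one_le_cos _
  -- second factor positivity for ξ > 0
  have hfac2 : ∀ x : ℝ, 0 < x →
      0 < (1 - τ * Real.cos (2*η)) * Real.exp x ^ 2 - Real.cos (2*η) + τ := by
    intro x hx
    have hu1 : 1 < Real.exp x := by
      have := Real.exp_lt_exp.mpr hx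
      simpa [Real.exp_zero] using this
    have hu2 : 1 < Real.exp x ^ 2 := by nlinarith
    have h1c : 0 < 1 - τ * Real.cos (2*η) := by nlinarith
    nlinarith
  have hmono : StrictMonoOn (Gfun τ η) (Set.Icc 0 ξτ) := by
    apply strictMonoOn_of_deriv_pos (convex_Icc _ _) hcont.continuousOn
    intro x hx
    rw [interior_Icc] at hx
    rw [(Gfun_hasDeriv τ η x).deriv, Gfun_deriv_eq τ η x hτ0 hτ1]
    have hτx : τ * Real.exp x ^ 2 < 1 := by
      have h2x : Real.exp (2*x) < Real.exp (-Real.log τ) := by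
        apply Real.exp_lt_exp.mpr
        have := hx.2; rw [hξτ] at this; linarith
      rw [Real.exp_neg, Real.exp_log hτ0] at h2x
      have hsq : Real.exp x ^ 2 = Real.exp (2*x) := by
        rw [sq, ← Real.exp_add]; ring_nf
      rw [hsq]
      have := mul_lt_mul_of_pos_left h2x hτ0
      rw [mul_inv_cancel₀ (ne_of_gt hτ0)] at this
      linarith
    apply div_pos
    · exact mul_pos (by linarith) (hfac2 x hx.1)
    · have h1τ : (0:ℝ) < (1+τ)*(1-τ) := by nlinarith
      exact mul_pos h1τ (pow_pos (Real.exp_pos x) 2)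
  have hanti : StrictAntiOn (Gfun τ η) (Set.Ici ξτ) := by
    apply strictAntiOn_of_deriv_neg (convex_Ici _) hcont.continuousOn
    intro x hx
    rw [interior_Ici] at hx
    rw [(Gfun_hasDeriv τ η x).deriv, Gfun_deriv_eq τ η x hτ0 hτ1]
    have hx' : -Real.log τ / 2 < x := by rw [← hξτ]; exact hx
    have hxpos : 0 < x := lt_trans hξτpos hx
    have hτx : 1 < τ * Real.exp x ^ 2 := by
      have h2x : Real.exp (-Real.log τ) < Real.exp (2*x) := by
        apply Real.exp_lt_exp.mpr
        linarith
      rw [Real.exp_neg, Real.exp_log hτ0] at h2x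
      have hsq : Real.exp x ^ 2 = Real.exp (2*x) := by
        rw [sq, ← Real.exp_add]; ring_nf
      rw [hsq]
      have := mul_lt_mul_of_pos_left h2x hτ0
      rw [mul_inv_cancel₀ (ne_of_gt hτ0)] at this
      linarith
    apply div_neg_of_neg_of_pos
    · exact mul_neg_of_neg_of_pos (by linarith) (hfac2 x hxpos)
    · have h1τ : (0:ℝ) < (1+τ)*(1-τ) := by nlinarith
      exact mul_pos h1τ (pow_pos (Real.exp_pos x) 2)
  intro ξ hξ0 hne
  rcases lt_or_gt_of_ne hne with h | h
  · have := hmono (Set.mem_Icc.mpr ⟨hξ0, h.le⟩) (Set.mem_Icc.mpr ⟨hξτpos.le, le_refl _⟩) h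
    rwa [Gfun_at_xitau τ η hτ0 hτ1] at this
  · have := hanti (Set.mem_Ici.mpr (le_refl _)) (Set.mem_Ici.mpr h.le) h
    rwa [Gfun_at_xitau τ η hτ0 hτ1] at this
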